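/- arXiv:2605.29722 — 6 statements merged into one kernel-verified Lean document; each statement's English description precedes it below -/
import Mathlib

section
/- Let R be an associative unital ring (not necessarily commutative), α : ℤ → R a family of elements, and S_s^k(n) the associated non-commutative Svinin polynomials. Then for all integers k ≥ 1, s ≥ 1 and all n ∈ ℤ, S_s^k(n) equals the sum, over all weakly increasing tuples 0 ≤ λ_1 ≤ λ_2 ≤ … ≤ λ_k ≤ s−1 of integers, of the ordered products α_{n−k−λ_1+1} · α_{n−k−λ_2+2} · ⋯ · α_{n−λ_k} (the factor with index j appearing in position j of the product, j = 1, …, k). -/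
/-- Non-commutative Svinin polynomials: `svinin α s k n` is `S_s^k(n)`, defined by
`S_s^0(n) = 1` and `S_s^k(n) = Σ_{j=0}^{s−1} α_{n−k−j+1} · S_{s−j}^{k−1}(n−j)` for `k ≥ 1`. -/
def svinin {R : Type*} [Ring R] (α : ℤ → R) : ℕ → ℕ → ℤ → R
  | _, 0, _ => 1
  | s, k + 1, n =>
      ∑ j ∈ Finset.range s,
        α (n - ((k : ℤ) + 1) - (j : ℤ) + 1) * svinin α (s - j) k (n - (j : ℤ))

lemma svinin_aux {R : Type*} [Ring R] (α : ℤ → R) :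
    ∀ (k s : ℕ) (n : ℤ),
    svinin α s k n =
      ∑ l ∈ Finset.univ.filter (fun l : Fin k → Fin s => ∀ i j : Fin k, i ≤ j → l i ≤ l j),
        (List.ofFn (fun i : Fin k =>
          α (n - (k : ℤ) - ((l i : ℕ) : ℤ) + ((i : ℕ) : ℤ) + 1))).prod := by
  intro k
  induction k with
  | zero =>
    intro s n
    simp [svinin]
  | succ k ih =>
    intro s n
    rw [show svinin α s (k + 1) n =
        ∑ j ∈ Finset.range s,
          α (n - ((k : ℤ) + 1) - (j : ℤ) + 1) * svinin α (s - j) k (n - (j : ℤ)) from rfl]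
    have key : ∀ j ∈ Finset.range s,
        α (n - ((k : ℤ) + 1) - (j : ℤ) + 1) * svinin α (s - j) k (n - (j : ℤ)) =
        ∑ μ ∈ Finset.univ.filter
            (fun l : Fin k → Fin (s - j) => ∀ i i' : Fin k, i ≤ i' → l i ≤ l i'),
          α (n - ((k : ℤ) + 1) - (j : ℤ) + 1) *
            (List.ofFn (fun i : Fin k =>
              α ((n - (j : ℤ)) - (k : ℤ) - ((μ i : ℕ) : ℤ) + ((i : ℕ) : ℤ) + 1))).prod := by
      intro j hj
      rw [ih, Finset.mul_sum]
    rw [Finset.sum_congr rfl key, Finset.sum_sigma']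
    refine Finset.sum_bij'
      (i := fun p hp =>
        Fin.cons ⟨p.1, Finset.mem_range.mp (Finset.mem_sigma.mp hp).1⟩
          (fun i => ⟨p.1 + (p.2 i : ℕ), by have := (p.2 i).isLt; omega⟩))
      (j := fun l _ =>
        ⟨(l 0 : ℕ), fun i => ⟨(l i.succ : ℕ) - (l 0 : ℕ),
          by have := (l i.succ).isLt; have := (l 0).isLt; omega⟩⟩)
      ?_ ?_ ?_ ?_ ?_
    · -- hi : image in filter
      intro p hp
      simp only [Finset.mem_filter, Finset.mem_univ, true_and]
      intro i i' hii'
      induction i using Fin.cases with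
      | zero =>
        induction i' using Fin.cases with
        | zero => exact le_refl _
        | succ i' => simp [Fin.le_def]
      | succ i =>
        induction i' using Fin.cases with
        | zero => exact absurd hii' (by simp [Fin.le_def])
        | succ i' =>
          have hμ := (Finset.mem_filter.mp (Finset.mem_sigma.mp hp).2).2
          have : p.2 i ≤ p.2 i' := hμ i i' (Fin.succ_le_succ_iff.mp hii')
          simp only [Fin.cons_succ, Fin.le_def]
          have := Fin.le_def.mp this
          omega
    · -- hj
      intro l hl
      have hlinc := (Finset.mem_filter.mp hl).2
      refine Finset.mem_sigma.mpr ⟨Finset.mem_range.mpr (l 0).isLt, ?_⟩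
      simp only [Finset.mem_filter, Finset.mem_univ, true_and]
      intro i i' hii'
      have h1 : l i.succ ≤ l i'.succ := hlinc i.succ i'.succ (Fin.succ_le_succ_iff.mpr hii')
      simp only [Fin.le_def] at h1 ⊢
      omega
    · -- left inverse
      intro p hp
      refine Sigma.ext rfl (heq_of_eq (funext fun i => Fin.ext ?_))
      simp only [Fin.cons_succ, Fin.cons_zero]
      omega
    · -- right inverse
      intro l hl
      have hlinc := (Finset.mem_filter.mp hl).2
      funext i
      induction i using Fin.cases with
      | zero =>
        simp only [Fin.cons_zero]
      | succ i =>
        simp only [Fin.cons_succ]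
        refine Fin.ext ?_
        have h1 : l 0 ≤ l i.succ := hlinc 0 i.succ (by simp [Fin.le_def])
        have := Fin.le_def.mp h1
        simp only
        omega
    · -- terms
      intro p hp
      rw [List.ofFn_succ, List.prod_cons]
      simp only [Fin.cons_zero, Fin.cons_succ, Fin.val_succ, Fin.val_zero]
      congr 1
      · congr 1
        push_cast
        ring
      · refine congrArg List.prod (congrArg List.ofFn (funext fun i => congrArg α ?_))
        push_cast
        ring

/-- Explicit formula: for `k, s ≥ 1`, `S_s^k(n)` is the sum over all weakly increasing
tuples `0 ≤ λ_1 ≤ ⋯ ≤ λ_k ≤ s − 1` of the ordered products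
`α_{n−k−λ_1+1} · α_{n−k−λ_2+2} · ⋯ · α_{n−λ_k}`. -/
theorem svinin_explicit_formula {R : Type*} [Ring R] (α : ℤ → R)
    (k s : ℕ) (hk : 1 ≤ k) (hs : 1 ≤ s) (n : ℤ) :
    svinin α s k n =
      ∑ l ∈ Finset.univ.filter (fun l : Fin k → Fin s => ∀ i j : Fin k, i ≤ j → l i ≤ l j),
        (List.ofFn (fun i : Fin k =>
          α (n - (k : ℤ) - ((l i : ℕ) : ℤ) + ((i : ℕ) : ℤ) + 1))).prod :=
  svinin_aux α k s n
end

section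
/- Let R be an associative unital ring (not necessarily commutative), α : ℤ → R a family of elements, and S_s^k(n) the associated non-commutative Svinin polynomials. Then for all integers k ≥ 1, s ≥ 1 and all n ∈ ℤ, S_s^k(n) = S_{s−1}^k(n) + S_s^{k−1}(n−1) · α_{n−s+1}. -/
lemma svinin_succ {R : Type*} [Ring R] (α : ℤ → R) (s k : ℕ) (n : ℤ) :
    svinin α s (k+1) n = ∑ j ∈ Finset.range s,
        α (n - ((k : ℤ) + 1) - (j : ℤ) + 1) * svinin α (s - j) k (n - (j : ℤ)) := rfl

lemma svinin_zero_left {R : Type*} [Ring R] (α : ℤ → R) (k : ℕ) (n : ℤ) :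
    svinin α 0 (k+1) n = 0 := by
  rw [svinin_succ]; simp

lemma svinin_key {R : Type*} [Ring R] (α : ℤ → R) :
    ∀ k s : ℕ, ∀ n : ℤ,
      svinin α (s+1) (k+1) n =
        svinin α s (k+1) n + svinin α (s+1) k (n-1) * α (n - (s : ℤ)) := by
  intro k
  induction k with
  | zero =>
    intro s n
    rw [svinin_succ, svinin_succ, Finset.sum_range_succ]
    simp only [svinin, mul_one, one_mul, Nat.cast_zero]
    congr 2
    push_cast
    ring
  | succ k ih =>
    intro s n
    rw [svinin_succ]
    have hterm : ∀ j ∈ Finset.range (s+1),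
        α (n - (((k+1:ℕ) : ℤ) + 1) - (j : ℤ) + 1) * svinin α (s + 1 - j) (k+1) (n - (j : ℤ))
        = α (n - (((k+1:ℕ) : ℤ) + 1) - (j : ℤ) + 1) * svinin α (s - j) (k+1) (n - (j : ℤ))
          + (α (n - (((k+1:ℕ) : ℤ) + 1) - (j : ℤ) + 1)
              * svinin α (s + 1 - j) k (n - (j : ℤ) - 1)) * α (n - (s : ℤ)) := by
      intro j hj
      have hjs : j ≤ s := Nat.lt_succ_iff.mp (Finset.mem_range.mp hj)
      have h1 : s + 1 - j = (s - j) + 1 := by omega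
      have h2 := ih (s - j) (n - (j : ℤ))
      rw [h1, h2]
      have hc : ((s - j : ℕ) : ℤ) = (s : ℤ) - (j : ℤ) := by
        push_cast [hjs]; ring
      rw [hc]
      have harg : n - (j:ℤ) - ((s:ℤ) - (j:ℤ)) = n - (s:ℤ) := by ring
      rw [harg, mul_add, ← mul_assoc]
    rw [Finset.sum_congr rfl hterm, Finset.sum_add_distrib]
    congr 1
    · -- first sum equals svinin α s (k+2) n
      rw [Finset.sum_range_succ]
      have : svinin α (s - s) (k+1) (n - (s:ℤ)) = 0 := by
        rw [Nat.sub_self]; exact svinin_zero_left α k _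
      rw [this, mul_zero, add_zero, svinin_succ]
    · -- second sum equals svinin α (s+1) (k+1) (n-1) * α (n - s)
      rw [← Finset.sum_mul, svinin_succ]
      congr 1
      apply Finset.sum_congr rfl
      intro j hj
      have e1 : n - (((k+1:ℕ) : ℤ) + 1) - (j : ℤ) + 1 = n - 1 - ((k:ℤ) + 1) - (j:ℤ) + 1 := by
        push_cast; ring
      have e2 : n - (j:ℤ) - 1 = n - 1 - (j:ℤ) := by ring
      rw [e1, e2]

/-- For `k, s ≥ 1`: `S_s^k(n) = S_{s−1}^k(n) + S_s^{k−1}(n−1) · α_{n−s+1}`. -/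
theorem svinin_rec_right {R : Type*} [Ring R] (α : ℤ → R)
    (k s : ℕ) (hk : 1 ≤ k) (hs : 1 ≤ s) (n : ℤ) :
    svinin α s k n =
      svinin α (s - 1) k n + svinin α s (k - 1) (n - 1) * α (n - (s : ℤ) + 1) := by
  obtain ⟨k', rfl⟩ : ∃ k', k = k' + 1 := ⟨k - 1, by omega⟩
  obtain ⟨s', rfl⟩ : ∃ s', s = s' + 1 := ⟨s - 1, by omega⟩
  have h := svinin_key α k' s' n
  have h1 : n - ((s' + 1 : ℕ) : ℤ) + 1 = n - (s' : ℤ) := by push_cast; ring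
  simp only [Nat.add_sub_cancel]
  rw [h1]
  exact h
end

section
/- Let R be an associative unital ring (not necessarily commutative), α : ℤ → R a family of elements, and S_s^k(n) the associated non-commutative Svinin polynomials. Let m ≥ 1 be an integer and let d_{2k} (0 ≤ k ≤ m) and c_{2k+1} (0 ≤ k ≤ m) be central elements of R. Define, for 0 ≤ k ≤ m and n ∈ ℤ, B_{2k+1,n} := c_{2k+1} − Σ_{r=1}^{m−k} d_{2(k+r)} · S_r^r(n+r−1) and P_{2k,n} := Σ_{r=0}^{m−k} d_{2(k+r)} · S_{r+1}^r(n+r−1). Then for every integer 1 ≤ k ≤ m and every n ∈ ℤ, α_n · P_{2(k−1),n+1} − P_{2(k−1),n} · α_n + α_n · B_{2k−1,n+1} − B_{2k−1,n−1} · α_n = 0. -/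
section Aux

variable {R : Type*} [Ring R] (α : ℤ → R)

lemma svinin_zero (k : ℕ) (n : ℤ) : svinin α 0 (k+1) n = 0 := by
  simp [svinin]

lemma svinin_split (s k : ℕ) (n : ℤ) :
    svinin α (s+1) (k+1) n = α (n - k) * svinin α (s+1) k n + svinin α s (k+1) (n-1) := by
  rw [svinin, Finset.sum_range_succ']
  rw [show svinin α s (k+1) (n-1) = ∑ j ∈ Finset.range s,
        α ((n-1) - ((k : ℤ) + 1) - (j : ℤ) + 1) * svinin α (s - j) k ((n-1) - (j : ℤ)) from by
      rw [svinin]]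
  rw [add_comm]
  congr 1
  · push_cast
    ring_nf
  · apply Finset.sum_congr rfl
    intro j hj
    have h1 : s + 1 - (j + 1) = s - j := by omega
    have h2 : n - ((k : ℤ) + 1) - ((j : ℤ) + 1) + 1 = (n-1) - ((k : ℤ) + 1) - (j : ℤ) + 1 := by ring
    have h3 : n - ((j : ℤ) + 1) = (n - 1) - (j : ℤ) := by ring
    rw [h1]
    push_cast
    rw [h2, h3]

lemma svinin_diff : ∀ (k : ℕ) (s : ℕ) (n : ℤ),
    svinin α (s+1) (k+1) n - svinin α s (k+1) n
      = svinin α (s+1) k (n-1) * α (n - (s:ℤ)) := by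
  intro k
  induction k with
  | zero =>
    intro s n
    rw [svinin, svinin, Finset.sum_range_succ]
    simp only [svinin, mul_one, Finset.sum_const, one_mul]
    rw [add_sub_cancel_left]
    congr 1
    push_cast
    ring
  | succ k ih =>
    intro s n
    rw [svinin, svinin, Finset.sum_range_succ, add_sub_right_comm,
      ← Finset.sum_sub_distrib]
    push_cast
    have key : ∀ j ∈ Finset.range s,
        α (n - ((k:ℤ)+1+1) - j + 1) * svinin α (s+1-j) (k+1) (n-j)
          - α (n - ((k:ℤ)+1+1) - j + 1) * svinin α (s-j) (k+1) (n-j)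
        = (α (n - ((k:ℤ)+1+1) - j + 1) * svinin α (s+1-j) k (n-1-j)) * α (n - s) := by
      intro j hj
      have hjs : j ≤ s := le_of_lt (Finset.mem_range.mp hj)
      rw [← mul_sub, show s + 1 - j = (s - j) + 1 from by omega, ih (s-j) (n-j)]
      have h1 : n - (j:ℤ) - ((s:ℤ) - (j:ℤ)) = n - s := by ring
      have h2 : n - (j:ℤ) - 1 = n - 1 - j := by ring
      rw [Nat.cast_sub hjs, h1, h2, mul_assoc]
    rw [Finset.sum_congr rfl key]
    have hlast : α (n - ((k:ℤ)+1+1) - (s:ℤ) + 1) * svinin α (s+1-s) (k+1) (n-s)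
        = (α (n - ((k:ℤ)+1+1) - s + 1) * svinin α (s+1-s) k (n-1-s)) * α (n - s) := by
      have h0 := ih 0 (n - s)
      rw [svinin_zero, sub_zero, Nat.cast_zero, sub_zero] at h0
      rw [show s + 1 - s = 1 from by omega, h0, show n - (s:ℤ) - 1 = n - 1 - s from by ring,
        mul_assoc]
    rw [hlast, ← Finset.sum_mul, ← add_mul, ← Finset.sum_range_succ
      (fun j => α (n - ((k:ℤ)+1+1) - j + 1) * svinin α (s+1-j) k (n-1-j)) s]
    congr 1
    rw [svinin]
    apply Finset.sum_congr rfl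
    intro j hj
    congr 2
    ring

lemma key_term (r : ℕ) (n : ℤ) (D : R) (hD : ∀ x, D * x = x * D) :
    α n * (D * svinin α (r+2) (r+1) (n + r + 1)) - (D * svinin α (r+2) (r+1) (n + r)) * α n
      - (α n * (D * svinin α (r+1) (r+1) (n + r + 1))
          - (D * svinin α (r+1) (r+1) (n + r - 1)) * α n) = 0 := by
  have hA := svinin_diff α r (r+1) (n + r + 1)
  push_cast at hA
  rw [show n + (r:ℤ) + 1 - ((r:ℤ) + 1) = n from by ring,
    show n + (r:ℤ) + 1 - 1 = n + r from by ring] at hA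
  have hA' := eq_add_of_sub_eq hA
  have hC := svinin_split α (r+1) r (n + r)
  rw [show n + (r:ℤ) - (r:ℤ) = n from by ring] at hC
  rw [hA', hC]
  set W := svinin α (r+2) r (n + r)
  have key : α n * (D * (W * α n)) = (D * (α n * W)) * α n := by
    simp only [← mul_assoc]
    rw [← hD (α n)]
  simp only [mul_add, add_mul]
  rw [key]
  abel

end Aux

/-- `Bcoef α m d c k n` is `B_{2k+1,n} = c_{2k+1} − Σ_{r=1}^{m−k} d_{2(k+r)} · S_r^r(n+r−1)`,
where `d j` stands for `d_{2j}` and `c j` stands for `c_{2j+1}`. -/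
def Bcoef {R : Type*} [Ring R] (α : ℤ → R) (m : ℕ) (d c : ℕ → R) (k : ℕ) (n : ℤ) : R :=
  c k - ∑ r ∈ Finset.Icc 1 (m - k), d (k + r) * svinin α r r (n + (r : ℤ) - 1)

/-- `Pcoef α m d k n` is `P_{2k,n} = Σ_{r=0}^{m−k} d_{2(k+r)} · S_{r+1}^r(n+r−1)`,
where `d j` stands for `d_{2j}`. -/
def Pcoef {R : Type*} [Ring R] (α : ℤ → R) (m : ℕ) (d : ℕ → R) (k : ℕ) (n : ℤ) : R :=
  ∑ r ∈ Finset.range (m - k + 1), d (k + r) * svinin α (r + 1) r (n + (r : ℤ) - 1)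

/-- For `1 ≤ k ≤ m` and all `n`:
`α_n · P_{2(k−1),n+1} − P_{2(k−1),n} · α_n + α_n · B_{2k−1,n+1} − B_{2k−1,n−1} · α_n = 0`. -/
theorem dPI_system_second_set {R : Type*} [Ring R] (α : ℤ → R)
    (m : ℕ) (hm : 1 ≤ m) (d c : ℕ → R)
    (hd : ∀ k ≤ m, d k ∈ Set.center R) (hc : ∀ k ≤ m, c k ∈ Set.center R)
    (k : ℕ) (hk1 : 1 ≤ k) (hk2 : k ≤ m) (n : ℤ) :
    α n * Pcoef α m d (k - 1) (n + 1) - Pcoef α m d (k - 1) n * α n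
      + α n * Bcoef α m d c (k - 1) (n + 1) - Bcoef α m d c (k - 1) (n - 1) * α n = 0 := by
  obtain ⟨K, rfl⟩ : ∃ K, k = K + 1 := ⟨k - 1, by omega⟩
  simp only [Nat.add_sub_cancel]
  have hKm : K + 1 ≤ m := hk2
  have hdc : ∀ r ≤ m - K, ∀ x : R, d (K + r) * x = x * d (K + r) := by
    intro r hr x
    exact ((Set.mem_center_iff.mp (hd (K + r) (by omega))).comm x)
  have hcc : c K * α n = α n * c K :=
    (Set.mem_center_iff.mp (hc K (by omega))).comm (α n)
  rw [Pcoef, Pcoef, Bcoef, Bcoef, Finset.mul_sum, Finset.sum_mul,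
    mul_sub, sub_mul, Finset.mul_sum, Finset.sum_mul, hcc]
  rw [show ∀ A B C D E : R, A - B + (C - D) - (C - E) = (A - B) - (D - E) from by intros; abel,
    ← Finset.sum_sub_distrib, ← Finset.sum_sub_distrib]
  rw [Finset.sum_range_succ']
  simp only [Nat.cast_zero, Nat.cast_add, Nat.cast_one, add_zero, Nat.add_zero]
  rw [show svinin α (0+1) 0 (n + 1 - 1) = 1 from rfl,
    show svinin α (0+1) 0 (n - 1) = 1 from rfl, mul_one, show d K * α n = α n * d K from hdc 0 (by omega) (α n),
    sub_self, add_zero, ← Finset.Ico_add_one_right_eq_Icc, Finset.sum_Ico_eq_sum_range]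
  simp only [Nat.add_sub_cancel]
  rw [← Finset.sum_sub_distrib]
  apply Finset.sum_eq_zero
  intro r hr
  have hrM : r < m - K := Finset.mem_range.mp hr
  rw [show 1 + r = r + 1 from by omega]
  push_cast
  have e1 : n + 1 + ((r:ℤ) + 1) - 1 = n + r + 1 := by ring
  have e2 : n + ((r:ℤ) + 1) - 1 = n + r := by ring
  have e3 : n - 1 + ((r:ℤ) + 1) - 1 = n + r - 1 := by ring
  rw [e1, e2, e3]
  exact key_term α r n (d (K + (r+1))) (hdc (r+1) (by omega))
end

section
/- Let R be an associative unital ring (not necessarily commutative), let α, β ∈ R with α invertible, and let t, c ∈ R be central elements. Define β' := t + α + c·α⁻¹ − α⁻¹·β·α and α' := −t + β' − α (the update rule of the system form of the first member of the non-commutative discrete first Painlevé hierarchy). Then the commutator transforms by conjugation: α'·β' − β'·α' = α⁻¹·(α·β − β·α)·α. -/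
/-- For the system form of the first member of the non-commutative discrete first Painlevé
hierarchy: with `β' = t + α + c·α⁻¹ − α⁻¹·β·α` and `α' = −t + β' − α` (where `t`, `c` are
central and `αinv` is a two-sided inverse of `α`), the commutator transforms by conjugation:
`α'·β' − β'·α' = α⁻¹·(α·β − β·α)·α`. -/
theorem dPI1_commutator_conjugation {R : Type*} [Ring R]
    (α β t c αinv : R)
    (hinv1 : α * αinv = 1) (hinv2 : αinv * α = 1)
    (ht : t ∈ Set.center R) (hc : c ∈ Set.center R) :
    let β' := t + α + c * αinv - αinv * β * α
    let α' := -t + β' - α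
    α' * β' - β' * α' = αinv * (α * β - β * α) * α := by
  intro β' α'
  have ht' : ∀ x : R, t * x = x * t := fun x => (Set.mem_center_iff.mp ht).1 x
  have hc' : ∀ x : R, c * x = x * c := fun x => (Set.mem_center_iff.mp hc).1 x
  set A : R := c * αinv - αinv * β * α with hA
  have hα' : α' = A := by simp [α', β', hA]; abel
  have hβ' : β' = t + α + A := by simp [β', hA]; abel
  rw [hα', hβ']
  have h1 : A * t = t * A := (ht' A).symm
  have h2 : A * α - α * A = αinv * (α * β - β * α) * α := by
    rw [hA]
    have e1 : c * αinv * α = c := by rw [mul_assoc, hinv2, mul_one]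
    have e2 : α * (c * αinv) = c := by
      rw [← mul_assoc, ← hc' α, mul_assoc, hinv1, mul_one]
    have e3 : α * (αinv * β * α) = β * α := by
      rw [← mul_assoc, ← mul_assoc, hinv1, one_mul]
    have e4 : αinv * (α * β) * α = β * α := by rw [← mul_assoc, hinv2, one_mul]
    rw [sub_mul, mul_sub, mul_sub, sub_mul, e1, e2, e3, e4, mul_assoc αinv β α]
    abel
  calc A * (t + α + A) - (t + α + A) * A
      = (A * t - t * A) + (A * α - α * A) := by noncomm_ring
    _ = A * α - α * A := by rw [h1]; abel
    _ = αinv * (α * β - β * α) * α := h2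
end

section
/- Let R be an associative unital ring (not necessarily commutative), let α, β ∈ R with α invertible, and let t, c ∈ R be central elements. Define β' := t + α + c·α⁻¹ − β and α' := −t + β' − α (the update rule of the system form of the alternative non-commutative discrete first Painlevé equation d-PI₁⁰). Then the commutator is preserved: α'·β' − β'·α' = α·β − β·α. -/
/-- For the system form of the alternative non-commutative discrete first Painlevé equation
d-PI₁⁰: with `β' = t + α + c·α⁻¹ − β` and `α' = −t + β' − α` (where `t`, `c` are central and
`αinv` is a two-sided inverse of `α`), the commutator is preserved:
`α'·β' − β'·α' = α·β − β·α`. -/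
theorem dPI10_commutator_preserved {R : Type*} [Ring R]
    (α β t c αinv : R)
    (hinv1 : α * αinv = 1) (hinv2 : αinv * α = 1)
    (ht : t ∈ Set.center R) (hc : c ∈ Set.center R) :
    let β' := t + α + c * αinv - β
    let α' := -t + β' - α
    α' * β' - β' * α' = α * β - β * α := by
  intro β' α'
  have hT : ∀ x : R, t * x = x * t := fun x => (ht.comm x)
  have hC : ∀ x : R, c * x = x * c := fun x => (hc.comm x)
  have hca : α * (c * αinv) = c := by
    rw [← mul_assoc, ← hC α, mul_assoc, hinv1, mul_one]
  have hac : (c * αinv) * α = c := by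
    rw [mul_assoc, hinv2, mul_one]
  show (-t + (t + α + c * αinv - β) - α) * (t + α + c * αinv - β)
      - (t + α + c * αinv - β) * (-t + (t + α + c * αinv - β) - α) = α * β - β * α
  have h1 : (-t + (t + α + c * αinv - β) - α) = c * αinv - β := by noncomm_ring
  rw [h1]
  have expand : (c * αinv - β) * (t + α + c * αinv - β)
      - (t + α + c * αinv - β) * (c * αinv - β)
      = (c * αinv * t - t * (c * αinv)) + (t * β - β * t)
        + ((c * αinv) * α - α * (c * αinv)) + (α * β - β * α) := by noncomm_ring
  rw [expand, hT (c * αinv), hT β, hca, hac]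
  abel
end

section
/- Let R be an associative unital ring (not necessarily commutative), α : ℤ → R a family of elements, and S_s^k(n) the associated non-commutative Svinin polynomials. Let c_0, c_1 ∈ R be central elements and let r ≥ 1 be an integer. Define F_{r,n} := S_r^r(n+r) − c_1·(−1)^n − c_0 and D_{r,n} := S_{r+1}^r(n+r) − S_r^r(n+r) − S_r^r(n+r−1). Then for every n ∈ ℤ, α_n · S_r^r(n+r) − S_r^r(n+r−2) · α_n = α_n·(F_{r,n} − F_{r,n−1} − D_{r,n}) + (F_{r,n−1} − F_{r,n−2} + D_{r,n−1})·α_n. (This rewrites the right-hand side of the r-th non-commutative Volterra lattice flow ∂_{t_r}α_n = S_r^r(n+r−2)·α_n − α_n·S_r^r(n+r), up to an overall sign, in the form used to reduce its stationary flows to the non-commutative discrete first Painlevé hierarchy with c_n = c_1·(−1)^n + c_0.) -/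
/-- `Fvl α c₀ c₁ r n` is `F_{r,n} = S_r^r(n+r) − c₁·(−1)^n − c₀`. -/
def Fvl {R : Type*} [Ring R] (α : ℤ → R) (c₀ c₁ : R) (r : ℕ) (n : ℤ) : R :=
  svinin α r r (n + (r : ℤ)) - c₁ * ((((-1 : ℤˣ) ^ n : ℤˣ) : ℤ) : R) - c₀

/-- `Dvl α r n` is `D_{r,n} = S_{r+1}^r(n+r) − S_r^r(n+r) − S_r^r(n+r−1)`. -/
def Dvl {R : Type*} [Ring R] (α : ℤ → R) (r : ℕ) (n : ℤ) : R :=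
  svinin α (r + 1) r (n + (r : ℤ)) - svinin α r r (n + (r : ℤ)) - svinin α r r (n + (r : ℤ) - 1)

/-- Right-sided recursion for Svinin polynomials:
`S_s^{k+1}(n) = Σ_{j=0}^{s-1} S_{j+1}^k(n-1) · α_{n-j}`. -/
lemma svinin_right {R : Type*} [Ring R] (α : ℤ → R) :
    ∀ (k s : ℕ) (n : ℤ),
      svinin α s (k + 1) n
        = ∑ j ∈ Finset.range s, svinin α (j + 1) k (n - 1) * α (n - (j : ℤ)) := by
  intro k
  induction k with
  | zero =>
    intro s n
    show (∑ j ∈ Finset.range s,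
        α (n - ((0 : ℕ) + 1 : ℤ) - (j : ℤ) + 1) * svinin α (s - j) 0 (n - (j : ℤ))) = _
    refine Finset.sum_congr rfl fun j hj => ?_
    have h1 : svinin α (s - j) 0 (n - (j : ℤ)) = 1 := rfl
    have h2 : svinin α (j + 1) 0 (n - 1) = 1 := rfl
    rw [h1, h2, mul_one, one_mul]
    congr 1
    push_cast
    ring
  | succ k ih =>
    intro s n
    have lhs_eq : svinin α s (k + 1 + 1) n
        = ∑ j ∈ Finset.range s,
            α (n - (((k + 1 : ℕ) : ℤ) + 1) - (j : ℤ) + 1) * svinin α (s - j) (k + 1) (n - (j : ℤ)) := rfl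
    rw [lhs_eq]
    have step : ∀ j : ℕ,
        α (n - (((k + 1 : ℕ) : ℤ) + 1) - (j : ℤ) + 1) * svinin α (s - j) (k + 1) (n - (j : ℤ))
          = ∑ i ∈ Finset.range (s - j),
              α (n - (k : ℤ) - 1 - (j : ℤ)) *
                (svinin α (i + 1) k (n - (j : ℤ) - 1) * α (n - (j : ℤ) - (i : ℤ))) := by
      intro j
      rw [ih (s - j) (n - (j : ℤ)), Finset.mul_sum]
      refine Finset.sum_congr rfl fun i hi => ?_
      rw [← mul_assoc, ← mul_assoc]
      congr 2
      push_cast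
      ring
    rw [Finset.sum_congr rfl fun j _ => step j]
    rw [← Finset.sum_range_diag_flip s
      (fun j i => α (n - (k : ℤ) - 1 - (j : ℤ)) *
        (svinin α (i + 1) k (n - (j : ℤ) - 1) * α (n - (j : ℤ) - (i : ℤ))))]
    refine Finset.sum_congr rfl fun m hm => ?_
    have hrhs : svinin α (m + 1) (k + 1) (n - 1)
        = ∑ j ∈ Finset.range (m + 1),
            α (n - 1 - ((k : ℤ) + 1) - (j : ℤ) + 1) * svinin α (m + 1 - j) k (n - 1 - (j : ℤ)) := rfl
    rw [hrhs, Finset.sum_mul]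
    refine Finset.sum_congr rfl fun j hj => ?_
    have hjm : j ≤ m := Nat.lt_succ_iff.mp (Finset.mem_range.mp hj)
    have hc : ((m - j : ℕ) : ℤ) = (m : ℤ) - (j : ℤ) := by omega
    have h1 : m - j + 1 = m + 1 - j := by omega
    rw [h1, mul_assoc]
    congr 1
    · congr 1; ring
    congr 1
    · congr 1; ring
    · congr 1; rw [hc]; ring

/-- `S_{s+1}^{k+1}(n) = S_s^{k+1}(n) + S_{s+1}^k(n-1) · α_{n-s}`. -/
lemma svinin_succ_right {R : Type*} [Ring R] (α : ℤ → R) (k s : ℕ) (n : ℤ) :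
    svinin α (s + 1) (k + 1) n
      = svinin α s (k + 1) n + svinin α (s + 1) k (n - 1) * α (n - (s : ℤ)) := by
  rw [svinin_right, svinin_right, Finset.sum_range_succ]

/-- `S_{s+1}^{k+1}(n) = α_{n-k} · S_{s+1}^k(n) + S_s^{k+1}(n-1)`. -/
lemma svinin_succ_left {R : Type*} [Ring R] (α : ℤ → R) (k s : ℕ) (n : ℤ) :
    svinin α (s + 1) (k + 1) n
      = α (n - (k : ℤ)) * svinin α (s + 1) k n + svinin α s (k + 1) (n - 1) := by
  have hl : svinin α (s + 1) (k + 1) n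
      = ∑ j ∈ Finset.range (s + 1),
          α (n - ((k : ℤ) + 1) - (j : ℤ) + 1) * svinin α (s + 1 - j) k (n - (j : ℤ)) := rfl
  have hr : svinin α s (k + 1) (n - 1)
      = ∑ j ∈ Finset.range s,
          α (n - 1 - ((k : ℤ) + 1) - (j : ℤ) + 1) * svinin α (s - j) k (n - 1 - (j : ℤ)) := rfl
  rw [hl, hr, Finset.sum_range_succ', add_comm]
  congr 1
  · simp only [Nat.cast_zero, sub_zero, Nat.sub_zero]
    rw [show n - ((k : ℤ) + 1) + 1 = n - (k : ℤ) from by ring]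
  · refine Finset.sum_congr rfl fun j hj => ?_
    have h1 : s + 1 - (j + 1) = s - j := by omega
    rw [h1]
    push_cast
    rw [show n - ((k : ℤ) + 1) - ((j : ℤ) + 1) + 1 = n - 1 - ((k : ℤ) + 1) - (j : ℤ) + 1 from by ring,
        show n - ((j : ℤ) + 1) = n - 1 - (j : ℤ) from by ring]

/-- The right-hand side of the `r`-th non-commutative Volterra lattice flow (up to sign)
rewritten via `F_{r,n}` and `D_{r,n}`: for every `n ∈ ℤ`,
`α_n·S_r^r(n+r) − S_r^r(n+r−2)·α_n
  = α_n·(F_{r,n} − F_{r,n−1} − D_{r,n}) + (F_{r,n−1} − F_{r,n−2} + D_{r,n−1})·α_n`. -/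
theorem volterra_stationary_rewrite {R : Type*} [Ring R] (α : ℤ → R)
    (c₀ c₁ : R) (hc₀ : c₀ ∈ Set.center R) (hc₁ : c₁ ∈ Set.center R)
    (r : ℕ) (hr : 1 ≤ r) (n : ℤ) :
    α n * svinin α r r (n + (r : ℤ)) - svinin α r r (n + (r : ℤ) - 2) * α n
      = α n * (Fvl α c₀ c₁ r n - Fvl α c₀ c₁ r (n - 1) - Dvl α r n)
        + (Fvl α c₀ c₁ r (n - 1) - Fvl α c₀ c₁ r (n - 2) + Dvl α r (n - 1)) * α n := by
  obtain ⟨k, rfl⟩ : ∃ k, r = k + 1 := ⟨r - 1, by omega⟩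
  have key : ∀ m : ℤ, (-1 : ℤˣ) ^ (m - 1) = -((-1 : ℤˣ) ^ m) := by
    intro m
    rw [zpow_sub_one, show ((-1 : ℤˣ))⁻¹ = -1 from by decide, mul_neg_one]
  set v : R := ((((-1 : ℤˣ) ^ n : ℤˣ) : ℤ) : R) with hv
  have hu1 : ((((-1 : ℤˣ) ^ (n - 1) : ℤˣ) : ℤ) : R) = -v := by
    rw [key n, hv, Units.val_neg, Int.cast_neg]
  have hu2 : ((((-1 : ℤˣ) ^ (n - 2) : ℤˣ) : ℤ) : R) = v := by
    rw [show (n - 2 : ℤ) = n - 1 - 1 from by ring, key (n - 1), key n, neg_neg, hv]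
  set a := α n with ha
  set A := svinin α (k + 1) (k + 1) (n + (k : ℤ) + 1) with hA
  set B := svinin α (k + 1) (k + 1) (n + (k : ℤ)) with hB
  set C := svinin α (k + 1) (k + 1) (n + (k : ℤ) - 1) with hC
  set Y := svinin α (k + 1 + 1) k (n + (k : ℤ)) with hY
  have hTA : svinin α (k + 1 + 1) (k + 1) (n + (k : ℤ) + 1) = A + Y * a := by
    have h := svinin_succ_right α k (k + 1) (n + (k : ℤ) + 1)
    rw [show n + (k : ℤ) + 1 - 1 = n + (k : ℤ) from by ring,
        show n + (k : ℤ) + 1 - ((k + 1 : ℕ) : ℤ) = n from by push_cast; ring] at h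
    exact h
  have hT'C : svinin α (k + 1 + 1) (k + 1) (n + (k : ℤ)) = a * Y + C := by
    have h := svinin_succ_left α k (k + 1) (n + (k : ℤ))
    rw [show n + (k : ℤ) - (k : ℤ) = n from by ring,
        show n + (k : ℤ) - 1 = n + (k : ℤ) - 1 from rfl] at h
    exact h
  have hFn : Fvl α c₀ c₁ (k + 1) n = A - c₁ * v - c₀ := by
    simp only [Fvl]
    rw [← hv, hA]
    push_cast
    rw [show n + ((k : ℤ) + 1) = n + (k : ℤ) + 1 from by ring]
  have hFn1 : Fvl α c₀ c₁ (k + 1) (n - 1) = B + c₁ * v - c₀ := by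
    simp only [Fvl]
    rw [hu1, hB]
    push_cast
    rw [show n - 1 + ((k : ℤ) + 1) = n + (k : ℤ) from by ring]
    noncomm_ring
  have hFn2 : Fvl α c₀ c₁ (k + 1) (n - 2) = C - c₁ * v - c₀ := by
    simp only [Fvl]
    rw [hu2, hC]
    push_cast
    rw [show n - 2 + ((k : ℤ) + 1) = n + (k : ℤ) - 1 from by ring]
  have hDn : Dvl α (k + 1) n
      = (A + Y * a) - A - B := by
    simp only [Dvl]
    rw [← hTA, hA, hB]
    push_cast
    rw [show n + ((k : ℤ) + 1) = n + (k : ℤ) + 1 from by ring,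
        show n + (k : ℤ) + 1 - 1 = n + (k : ℤ) from by ring]
  have hDn1 : Dvl α (k + 1) (n - 1)
      = (a * Y + C) - B - C := by
    simp only [Dvl]
    rw [← hT'C, hB, hC]
    push_cast
    rw [show n - 1 + ((k : ℤ) + 1) = n + (k : ℤ) from by ring,
        show n + (k : ℤ) - 1 = n + (k : ℤ) - 1 from rfl]
  have hcom : a * (c₁ * v) = (c₁ * v) * a := by
    have h1 : c₁ * a = a * c₁ := (Set.mem_center_iff.mp hc₁).comm a
    have h2 : a * v = v * a := by
      rw [hv]; exact (Int.commute_cast a _)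
    calc a * (c₁ * v) = (a * c₁) * v := by rw [mul_assoc]
      _ = (c₁ * a) * v := by rw [h1]
      _ = c₁ * (a * v) := by rw [mul_assoc]
      _ = c₁ * (v * a) := by rw [h2]
      _ = (c₁ * v) * a := by rw [mul_assoc]
  have hgoal : α n * svinin α (k + 1) (k + 1) (n + ((k + 1 : ℕ) : ℤ))
        - svinin α (k + 1) (k + 1) (n + ((k + 1 : ℕ) : ℤ) - 2) * α n = a * A - C * a := by
    rw [ha, hA, hC]
    push_cast
    rw [show n + ((k : ℤ) + 1) = n + (k : ℤ) + 1 from by ring,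
        show n + (k : ℤ) + 1 - 2 = n + (k : ℤ) - 1 from by ring]
  rw [hgoal, hFn, hFn1, hFn2, hDn, hDn1]
  calc a * A - C * a
      = (a * (A - c₁ * v - c₀ - (B + c₁ * v - c₀) - ((A + Y * a) - A - B))
        + ((B + c₁ * v - c₀) - (C - c₁ * v - c₀) + ((a * Y + C) - B - C)) * a)
        + (2 : ℤ) • (a * (c₁ * v) - (c₁ * v) * a) := by noncomm_ring
    _ = _ := by rw [hcom]; noncomm_ring
end
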